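/- arXiv:0906.0453 — 12 statements merged into one kernel-verified Lean document; each statement's English description precedes it below -/
import Mathlib

section
/- For a nonempty convex subset U of a separated locally convex space X and a point x in U, x belongs to the quasi-relative interior of U if and only if the normal cone N_U(x) = {x* ∈ X* : ⟨x*, y - x⟩ ≤ 0 for all y ∈ U} is a linear subspace of X*. -/
open Set Pointwise Topology

/-- The conic hull: cone(S) = ⋃_{t ≥ 0} t • S. -/
def coneHull {E : Type*} [AddCommGroup E] [Module ℝ E] (S : Set E) : Set E :=
  {x | ∃ t : ℝ, 0 ≤ t ∧ ∃ s ∈ S, x = t • s}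

/-- The quasi-relative interior. -/
def qri {E : Type*} [AddCommGroup E] [Module ℝ E] [TopologicalSpace E] (U : Set E) : Set E :=
  {x | x ∈ U ∧ ∃ M : Submodule ℝ E, closure (coneHull (U - {x})) = (M : Set E)}

/-- The quasi interior. -/
def qi {E : Type*} [AddCommGroup E] [Module ℝ E] [TopologicalSpace E] (U : Set E) : Set E :=
  {x | x ∈ U ∧ closure (coneHull (U - {x})) = Set.univ}

/-- The algebraic interior (core). -/
def algCore {E : Type*} [AddCommGroup E] [Module ℝ E] (U : Set E) : Set E :=
  {x | x ∈ U ∧ coneHull (U - {x}) = Set.univ}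

/-- The relative algebraic interior (intrinsic core). -/
def icr {E : Type*} [AddCommGroup E] [Module ℝ E] (U : Set E) : Set E :=
  {x | x ∈ U ∧ ∃ M : Submodule ℝ E, coneHull (U - {x}) = (M : Set E)}

/-- The strong quasi-relative interior. -/
def sqri {E : Type*} [AddCommGroup E] [Module ℝ E] [TopologicalSpace E] (U : Set E) : Set E :=
  {x | x ∈ U ∧ ∃ M : Submodule ℝ E, coneHull (U - {x}) = (M : Set E) ∧ IsClosed (M : Set E)}

/-- The normal cone of U at x. -/
def normalCone {E : Type*} [AddCommGroup E] [Module ℝ E] [TopologicalSpace E]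
    (U : Set E) (x : E) : Set (E →L[ℝ] ℝ) :=
  {f | ∀ y ∈ U, f (y - x) ≤ 0}

section Aux

variable {E : Type*} [AddCommGroup E] [Module ℝ E]

lemma mem_coneHull_of_mem {S : Set E} {s : E} (hs : s ∈ S) : s ∈ coneHull S :=
  ⟨1, zero_le_one, s, hs, (one_smul _ _).symm⟩

lemma smul_mem_coneHull {S : Set E} {v : E} {t : ℝ} (ht : 0 ≤ t) (hv : v ∈ coneHull S) :
    t • v ∈ coneHull S := by
  obtain ⟨r, hr, s, hs, rfl⟩ := hv
  exact ⟨t * r, mul_nonneg ht hr, s, hs, (mul_smul t r s).symm⟩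

lemma convex_coneHull {S : Set E} (hS : Convex ℝ S) : Convex ℝ (coneHull S) := by
  rintro u ⟨t, ht, s, hs, rfl⟩ v ⟨t', ht', s', hs', rfl⟩ a b ha hb hab
  by_cases h : a * t + b * t' = 0
  · have h1 : a * t = 0 := by nlinarith [mul_nonneg ha ht, mul_nonneg hb ht']
    have h2 : b * t' = 0 := by nlinarith [mul_nonneg ha ht, mul_nonneg hb ht']
    refine ⟨0, le_refl 0, s, hs, ?_⟩
    rw [smul_smul, smul_smul, h1, h2]
    simp
  · have hr : 0 < a * t + b * t' :=
      lt_of_le_of_ne (by positivity) (Ne.symm h)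
    refine ⟨a * t + b * t',
      hr.le, (a * t / (a * t + b * t')) • s + (b * t' / (a * t + b * t')) • s',
      hS hs hs' (by positivity) (by positivity) (by field_simp), ?_⟩
    rw [smul_add, smul_smul, smul_smul, smul_smul, smul_smul]
    rw [mul_div_cancel₀ _ h, mul_div_cancel₀ _ h]

variable [TopologicalSpace E]

lemma le_zero_on_closure_coneHull (f : E →L[ℝ] ℝ) {S : Set E}
    (hf : ∀ s ∈ S, f s ≤ 0) : ∀ v ∈ closure (coneHull S), f v ≤ 0 := by
  intro v hv
  have h1 : coneHull S ⊆ f ⁻¹' Iic 0 := by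
    rintro _ ⟨t, ht, s, hs, rfl⟩
    simp only [mem_preimage, mem_Iic, map_smul, smul_eq_mul]
    exact mul_nonpos_of_nonneg_of_nonpos ht (hf s hs)
  exact closure_minimal h1 (isClosed_Iic.preimage f.continuous) hv

lemma smul_mem_closure_coneHull [ContinuousSMul ℝ E] {S : Set E} {v : E} {t : ℝ}
    (ht : 0 ≤ t) (hv : v ∈ closure (coneHull S)) : t • v ∈ closure (coneHull S) := by
  have hmaps : Set.MapsTo (fun w => t • w) (coneHull S) (coneHull S) :=
    fun w hw => smul_mem_coneHull ht hw
  exact hmaps.closure (continuous_const_smul t) hv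

end Aux

theorem qri_iff_normalCone_linear_subspace
    {X : Type*} [AddCommGroup X] [Module ℝ X] [TopologicalSpace X]
    [IsTopologicalAddGroup X] [ContinuousSMul ℝ X] [LocallyConvexSpace ℝ X] [T2Space X]
    (U : Set X) (hne : U.Nonempty) (hconv : Convex ℝ U) (x : X) (hx : x ∈ U) :
    x ∈ qri U ↔
      ∃ M : Submodule ℝ (X →L[ℝ] ℝ), normalCone U x = (M : Set (X →L[ℝ] ℝ)) := by
  have hsub : ∀ y ∈ U, y - x ∈ U - ({x} : Set X) :=
    fun y hy => Set.sub_mem_sub hy rfl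
  have hNle : ∀ f ∈ normalCone U x, ∀ s ∈ U - ({x} : Set X), f s ≤ 0 := by
    intro f hf s hs
    obtain ⟨y, hy, z, hz, rfl⟩ := hs
    rw [Set.mem_singleton_iff] at hz
    subst hz
    exact hf y hy
  constructor
  · rintro ⟨hxU, M, hM⟩
    refine ⟨{ carrier := {f | ∀ y ∈ U, f (y - x) = 0}
              zero_mem' := fun y _ => rfl
              add_mem' := fun hf hg y hy => by
                simp only [ContinuousLinearMap.add_apply, hf y hy, hg y hy, add_zero]
              smul_mem' := fun c f hf y hy => by
                simp only [ContinuousLinearMap.coe_smul', Pi.smul_apply, hf y hy,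
                  smul_eq_mul, mul_zero] }, ?_⟩
    ext f
    constructor
    · intro hf y hy
      have h1 : f (y - x) ≤ 0 := hf y hy
      have h2 : -(y - x) ∈ closure (coneHull (U - ({x} : Set X))) := by
        have hmem : y - x ∈ (M : Set X) := by
          rw [← hM]
          exact subset_closure (mem_coneHull_of_mem (hsub y hy))
        rw [hM]
        exact M.neg_mem hmem
      have h3 : f (-(y - x)) ≤ 0 :=
        le_zero_on_closure_coneHull f (hNle f hf) _ h2
      rw [map_neg] at h3
      linarith
    · intro hf y hy
      exact le_of_eq (hf y hy)
  · rintro ⟨M, hM⟩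
    refine ⟨hx, ⨅ f ∈ normalCone U x, LinearMap.ker (f : X →ₗ[ℝ] ℝ), ?_⟩
    have hzero : (0 : X) ∈ coneHull (U - ({x} : Set X)) :=
      ⟨0, le_refl 0, x - x, hsub x hx, (zero_smul ℝ _).symm⟩
    have hCclosed : IsClosed (closure (coneHull (U - ({x} : Set X)))) := isClosed_closure
    have hCconvex : Convex ℝ (closure (coneHull (U - ({x} : Set X)))) :=
      (convex_coneHull (hconv.sub (convex_singleton x))).closure
    ext v
    simp only [SetLike.mem_coe, Submodule.mem_iInf, LinearMap.mem_ker, ContinuousLinearMap.coe_coe]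
    constructor
    · intro hv f hf
      have h1 : f v ≤ 0 := le_zero_on_closure_coneHull f (hNle f hf) v hv
      have hnf : -f ∈ normalCone U x := by
        rw [hM] at hf ⊢
        exact neg_mem hf
      have h2 : (-f) v ≤ 0 := le_zero_on_closure_coneHull (-f) (hNle (-f) hnf) v hv
      rw [ContinuousLinearMap.neg_apply] at h2
      linarith
    · intro hv
      by_contra hvC
      obtain ⟨f, u, hfu, huv⟩ :=
        geometric_hahn_banach_closed_point hCconvex hCclosed hvC
      have hu0 : 0 < u := by
        have := hfu 0 (subset_closure hzero)
        rwa [map_zero] at this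
      have hfle : ∀ w ∈ closure (coneHull (U - ({x} : Set X))), f w ≤ 0 := by
        intro w hw
        by_contra hpos
        push_neg at hpos
        have ht : (0 : ℝ) ≤ (u + 1) / f w := by positivity
        have := hfu _ (smul_mem_closure_coneHull ht hw)
        rw [map_smul, smul_eq_mul, div_mul_cancel₀ _ (ne_of_gt hpos)] at this
        linarith
      have hfN : f ∈ normalCone U x := fun y hy =>
        hfle _ (subset_closure (mem_coneHull_of_mem (hsub y hy)))
      have := hv f hfN
      linarith
end

section
/- For a nonempty convex subset U of a separated locally convex space X and a point x in U, x belongs to the quasi interior of U if and only if the normal cone N_U(x) equals {0}. -/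
open Set Pointwise Topology

lemma coneHull_convex {E : Type*} [AddCommGroup E] [Module ℝ E] {S : Set E}
    (hS : Convex ℝ S) : Convex ℝ (coneHull S) := by
  rintro _ ⟨t1, ht1, s1, hs1, rfl⟩ _ ⟨t2, ht2, s2, hs2, rfl⟩ a b ha hb hab
  by_cases h : a * t1 + b * t2 = 0
  · have h1 : a * t1 = 0 := by nlinarith [mul_nonneg ha ht1, mul_nonneg hb ht2]
    have h2 : b * t2 = 0 := by nlinarith [mul_nonneg ha ht1, mul_nonneg hb ht2]
    refine ⟨0, le_refl 0, s1, hs1, ?_⟩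
    rw [smul_smul, smul_smul, h1, h2]; simp
  · set t := a * t1 + b * t2 with htdef
    have ht : 0 < t := lt_of_le_of_ne (by positivity) (Ne.symm h)
    refine ⟨t, ht.le, (a*t1/t) • s1 + (b*t2/t) • s2, ?_, ?_⟩
    · exact hS hs1 hs2 (by positivity) (by positivity) (by field_simp; exact htdef.symm)
    · rw [smul_add, smul_smul, smul_smul, smul_smul, smul_smul]
      congr 2 <;> field_simp

lemma coneHull_smul_mem {E : Type*} [AddCommGroup E] [Module ℝ E] {S : Set E}
    {v : E} (hv : v ∈ coneHull S) {c : ℝ} (hc : 0 ≤ c) : c • v ∈ coneHull S := by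
  obtain ⟨t, ht, s, hs, rfl⟩ := hv
  exact ⟨c * t, mul_nonneg hc ht, s, hs, (smul_smul c t s)⟩

theorem qi_iff_normalCone_eq_zero
    {X : Type*} [AddCommGroup X] [Module ℝ X] [TopologicalSpace X]
    [IsTopologicalAddGroup X] [ContinuousSMul ℝ X] [LocallyConvexSpace ℝ X] [T2Space X]
    (U : Set X) (hne : U.Nonempty) (hconv : Convex ℝ U) (x : X) (hx : x ∈ U) :
    x ∈ qi U ↔ normalCone U x = {0} := by
  have hsub : ∀ y ∈ U, y - x ∈ coneHull (U - {x}) := fun y hy =>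
    ⟨1, zero_le_one, y - x, sub_mem_sub hy rfl, (one_smul ℝ _).symm⟩
  have hzero : (0 : X) ∈ coneHull (U - {x}) :=
    ⟨0, le_refl 0, x - x, sub_mem_sub hx rfl, (zero_smul ℝ _).symm⟩
  constructor
  · rintro ⟨-, hcl⟩
    ext f
    simp only [Set.mem_singleton_iff]
    constructor
    · intro hf
      have hcone : ∀ v ∈ coneHull (U - {x}), f v ≤ 0 := by
        rintro _ ⟨t, ht, s, hs, rfl⟩
        obtain ⟨y, hy, w, hw, rfl⟩ := hs
        rw [Set.mem_singleton_iff] at hw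
        subst hw
        rw [map_smul]
        exact smul_nonpos_of_nonneg_of_nonpos ht (hf y hy)
      have hclosure : closure (coneHull (U - {x})) ⊆ {v | f v ≤ 0} :=
        closure_minimal hcone (isClosed_le f.continuous continuous_const)
      have hall : ∀ v : X, f v ≤ 0 := fun v => hclosure (by rw [hcl]; trivial)
      ext v
      have h1 := hall v
      have h2 := hall (-v)
      simp only [map_neg] at h2
      simpa using le_antisymm h1 (by linarith)
    · rintro rfl y _; simp
  · intro hN
    refine ⟨hx, ?_⟩
    by_contra hne'
    obtain ⟨z, hz⟩ : ∃ z, z ∉ closure (coneHull (U - {x})) := by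
      by_contra h
      push_neg at h
      exact hne' (Set.eq_univ_of_forall h)
    have hconvC : Convex ℝ (closure (coneHull (U - {x}))) :=
      (coneHull_convex (hconv.sub (convex_singleton x))).closure
    obtain ⟨f, u, hfu, huz⟩ := geometric_hahn_banach_closed_point hconvC isClosed_closure hz
    have hfle : ∀ v ∈ coneHull (U - {x}), f v ≤ 0 := by
      intro v hv
      by_contra hpos
      push_neg at hpos
      obtain ⟨c, hc⟩ := exists_nat_gt (u / f v)
      have hcv : (c : ℝ) • v ∈ coneHull (U - {x}) := coneHull_smul_mem hv (by positivity)
      have hlt := hfu _ (subset_closure hcv)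
      rw [map_smul, smul_eq_mul] at hlt
      have hdiv : u / f v < c := hc
      rw [div_lt_iff₀ hpos] at hdiv
      linarith
    have hfN : f ∈ normalCone U x := fun y hy => hfle _ (hsub y hy)
    rw [hN, Set.mem_singleton_iff] at hfN
    have h0 : f 0 < u := hfu 0 (subset_closure hzero)
    rw [hfN] at huz h0
    simp at huz h0
    linarith
end

section
/- Let U be a nonempty convex subset of a separated locally convex space X. Then for every t ∈ (0,1], t·qri(U) + (1-t)·U ⊆ qri(U); in particular qri(U) is a convex set. -/
open Set Pointwise Topology

lemma subset_coneHull {E : Type*} [AddCommGroup E] [Module ℝ E] (S : Set E) :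
    S ⊆ coneHull S := fun s hs => ⟨1, by norm_num, s, hs, by simp⟩

lemma qri_key {X : Type*} [AddCommGroup X] [Module ℝ X] [TopologicalSpace X]
    [IsTopologicalAddGroup X] [ContinuousSMul ℝ X]
    {U : Set X} (hconv : Convex ℝ U) {t : ℝ} (ht : 0 < t) (ht1 : t ≤ 1)
    {x y : X} (hx : x ∈ qri U) (hy : y ∈ U) : t • x + (1 - t) • y ∈ qri U := by
  obtain ⟨hxU, M, hM⟩ := hx
  set z := t • x + (1 - t) • y with hzdef
  have hz : z ∈ U := hconv hxU hy ht.le (by linarith) (by ring)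
  have hMclosed : IsClosed (M : Set X) := hM ▸ isClosed_closure
  have hUx : ∀ u ∈ U, u - x ∈ (M : Set X) := fun u hu =>
    hM ▸ subset_closure (subset_coneHull _ (by exact ⟨u, hu, x, rfl, rfl⟩))
  refine ⟨hz, M, le_antisymm ?_ ?_⟩
  · -- closure (coneHull (U - {z})) ⊆ M
    refine closure_minimal ?_ hMclosed
    rintro v ⟨r, hr, s, ⟨u, hu, x', hx', rfl⟩, rfl⟩
    rcases hx' with rfl
    have h1 : u - z = (u - x) - (1 - t) • (y - x) := by
      simp only [hzdef]; module
    have h2 : u - z ∈ (M : Set X) := by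
      rw [h1]; exact M.sub_mem (hUx u hu) (M.smul_mem _ (hUx y hy))
    exact M.smul_mem r h2
  · -- M ⊆ closure (coneHull (U - {z}))
    rw [← hM]
    refine closure_mono ?_
    rintro v ⟨r, hr, s, ⟨u, hu, x', hx', rfl⟩, rfl⟩
    rcases hx' with rfl
    set w := t • u + (1 - t) • y with hwdef
    have hw : w ∈ U := hconv hu hy ht.le (by linarith) (by ring)
    refine ⟨r * t⁻¹, by positivity, w - z, ⟨w, hw, z, rfl, rfl⟩, ?_⟩
    have hwz : w - z = t • (u - x') := by simp only [hwdef, hzdef]; module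
    rw [hwz, smul_smul, mul_assoc, inv_mul_cancel₀ ht.ne', mul_one]

theorem qri_segment_and_convex
    {X : Type*} [AddCommGroup X] [Module ℝ X] [TopologicalSpace X]
    [IsTopologicalAddGroup X] [ContinuousSMul ℝ X] [LocallyConvexSpace ℝ X] [T2Space X]
    (U : Set X) (hne : U.Nonempty) (hconv : Convex ℝ U) :
    (∀ t : ℝ, 0 < t → t ≤ 1 → t • qri U + (1 - t) • U ⊆ qri U) ∧ Convex ℝ (qri U) := by
  constructor
  · rintro t ht ht1 w ⟨a, ⟨x, hx, rfl⟩, b, ⟨y, hy, rfl⟩, rfl⟩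
    exact qri_key hconv ht ht1 hx hy
  · rintro x hx y hy a b ha hb hab
    rcases eq_or_lt_of_le ha with rfl | ha'
    · have hb1 : b = 1 := by linarith
      simpa [hb1] using hy
    · have : b = 1 - a := by linarith
      subst this
      exact qri_key hconv ha' (by linarith) hx hy.1
end

section
/- Let U be a nonempty convex subset of a separated locally convex space X with qri(U) ≠ ∅. Then cl(qri(U)) = cl(U). -/
open Set Pointwise Topology

lemma mem_coneHull_self {E : Type*} [AddCommGroup E] [Module ℝ E] {S : Set E} {s : E}
    (hs : s ∈ S) : s ∈ coneHull S :=
  ⟨1, zero_le_one, s, hs, (one_smul ℝ s).symm⟩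

lemma mem_sub_singleton {E : Type*} [AddCommGroup E] {U : Set E} {a y : E} :
    y ∈ U - {a} ↔ ∃ w ∈ U, y = w - a := by
  rw [Set.mem_sub]
  constructor
  · rintro ⟨w, hw, e, he, heq⟩
    rw [Set.mem_singleton_iff] at he
    exact ⟨w, hw, by rw [← heq, he]⟩
  · rintro ⟨w, hw, rfl⟩
    exact ⟨w, hw, a, rfl, rfl⟩

/-- Accessibility lemma: the open segment from a qri point to any point of U stays in qri. -/
lemma qri_segment {X : Type*} [AddCommGroup X] [Module ℝ X] [TopologicalSpace X]
    [IsTopologicalAddGroup X] [ContinuousSMul ℝ X]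
    {U : Set X} (hconv : Convex ℝ U) {a u : X} (ha : a ∈ qri U) (hu : u ∈ U)
    {l : ℝ} (hl0 : 0 < l) (hl1 : l ≤ 1) :
    l • a + (1 - l) • u ∈ qri U := by
  obtain ⟨haU, N, hN⟩ := ha
  set z : X := l • a + (1 - l) • u with hz
  have hzU : z ∈ U := hconv haU hu hl0.le (by linarith) (by ring)
  refine ⟨hzU, N, ?_⟩
  have hNclosed : IsClosed (N : Set X) := hN ▸ isClosed_closure
  -- key: coneHull (U - {a}) ⊆ coneHull (U - {z})
  have hsub1 : coneHull (U - {a}) ⊆ coneHull (U - {z}) := by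
    rintro y ⟨t, ht, s, hs, rfl⟩
    obtain ⟨w, hw, rfl⟩ := mem_sub_singleton.mp hs
    refine ⟨t / l, div_nonneg ht hl0.le, l • (w - a), ?_, ?_⟩
    · have hp : l • w + (1 - l) • u ∈ U := hconv hw hu hl0.le (by linarith) (by ring)
      refine mem_sub_singleton.mpr ⟨l • w + (1 - l) • u, hp, ?_⟩
      rw [hz]; module
    · rw [smul_smul, div_mul_cancel₀ _ hl0.ne']
  -- and coneHull (U - {z}) ⊆ N
  have hsub2 : coneHull (U - {z}) ⊆ (N : Set X) := by
    rintro y ⟨t, ht, s, hs, rfl⟩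
    obtain ⟨w, hw, rfl⟩ := mem_sub_singleton.mp hs
    have hwa : w - a ∈ N := by
      have h1 : w - a ∈ U - {a} := mem_sub_singleton.mpr ⟨w, hw, rfl⟩
      have := subset_closure (mem_coneHull_self h1)
      rwa [hN] at this
    have hua : u - a ∈ N := by
      have h1 : u - a ∈ U - {a} := mem_sub_singleton.mpr ⟨u, hu, rfl⟩
      have := subset_closure (mem_coneHull_self h1)
      rwa [hN] at this
    have heq : w - z = (w - a) + (1 - l) • (a - u) := by rw [hz]; module
    have hmem : w - z ∈ N := by
      rw [heq]
      exact N.add_mem hwa (N.smul_mem _ (by simpa [neg_sub] using N.neg_mem hua))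
    exact N.smul_mem t hmem
  apply subset_antisymm
  · exact closure_minimal hsub2 hNclosed
  · rw [← hN]
    exact closure_mono hsub1

theorem closure_qri_eq_closure
    {X : Type*} [AddCommGroup X] [Module ℝ X] [TopologicalSpace X]
    [IsTopologicalAddGroup X] [ContinuousSMul ℝ X] [LocallyConvexSpace ℝ X] [T2Space X]
    (U : Set X) (hne : U.Nonempty) (hconv : Convex ℝ U) (hqri : (qri U).Nonempty) :
    closure (qri U) = closure U := by
  obtain ⟨a, ha⟩ := hqri
  apply subset_antisymm
  · exact closure_mono fun x hx => hx.1
  · apply closure_minimal _ isClosed_closure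
    intro u hu
    have htend : Filter.Tendsto (fun l : ℝ => l • a + (1 - l) • u) (𝓝[>] 0) (𝓝 u) := by
      have hc : Continuous (fun l : ℝ => l • a + (1 - l) • u) := by continuity
      have := hc.tendsto 0
      simp only [zero_smul, sub_zero, one_smul, zero_add] at this
      exact this.mono_left nhdsWithin_le_nhds
    refine mem_closure_of_tendsto htend ?_
    have hev : ∀ᶠ l : ℝ in 𝓝[>] 0, l ∈ Set.Ioc (0 : ℝ) 1 :=
      Ioc_mem_nhdsGT_of_mem ⟨le_refl _, one_pos⟩
    exact hev.mono fun l hl => qri_segment hconv ha hu hl.1 hl.2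
end

section
/- Let U and V be nonempty convex subsets of a separated locally convex space X. If qri(U) ∩ V ≠ ∅ and 0 ∈ qi(U - U), then 0 ∈ qi(U - V). -/
open Set Pointwise Topology

theorem zero_mem_qi_sub_of_qri_inter
    {X : Type*} [AddCommGroup X] [Module ℝ X] [TopologicalSpace X]
    [IsTopologicalAddGroup X] [ContinuousSMul ℝ X] [LocallyConvexSpace ℝ X] [T2Space X]
    (U V : Set X) (hUne : U.Nonempty) (hVne : V.Nonempty)
    (hUconv : Convex ℝ U) (hVconv : Convex ℝ V)
    (h1 : (qri U ∩ V).Nonempty) (h2 : (0 : X) ∈ qi (U - U)) :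
    (0 : X) ∈ qi (U - V) := by
  obtain ⟨x, ⟨hxU, M, hM⟩, hxV⟩ := h1
  obtain ⟨-, h2c⟩ := h2
  have hmono : ∀ {A B : Set X}, A ⊆ B → coneHull A ⊆ coneHull B := by
    rintro A B hAB y ⟨t, ht, s, hs, rfl⟩
    exact ⟨t, ht, s, hAB hs, rfl⟩
  have hsub0 : ∀ (S : Set X), S - {(0:X)} = S := by
    intro S; simp [Set.sub_singleton]
  rw [hsub0] at h2c
  -- U - {x} ⊆ M
  have hUx : U - {x} ⊆ (M : Set X) := fun y hy => by
    rw [← hM]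
    exact subset_closure ⟨1, zero_le_one, y, hy, (one_smul ℝ y).symm⟩
  have hUU : coneHull (U - U) ⊆ (M : Set X) := by
    rintro y ⟨t, ht, s, hs, rfl⟩
    obtain ⟨a, ha, b, hb, rfl⟩ := hs
    have h1 : a - x ∈ M := hUx ⟨a, ha, x, rfl, rfl⟩
    have h2 : b - x ∈ M := hUx ⟨b, hb, x, rfl, rfl⟩
    have : a - b ∈ M := by
      have := M.sub_mem h1 h2
      simpa using this
    exact M.smul_mem t this
  have hMclosed : IsClosed (M : Set X) := by
    rw [← hM]; exact isClosed_closure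
  have hMuniv : (M : Set X) = Set.univ := by
    apply Set.eq_univ_of_univ_subset
    rw [← h2c]
    exact hMclosed.closure_subset_iff.mpr hUU
  refine ⟨⟨x, hxU, x, hxV, sub_self x⟩, ?_⟩
  rw [hsub0]
  apply Set.eq_univ_of_univ_subset
  calc Set.univ = (M : Set X) := hMuniv.symm
    _ = closure (coneHull (U - {x})) := hM.symm
    _ ⊆ closure (coneHull (U - V)) :=
        closure_mono (hmono (Set.sub_subset_sub (subset_refl U) (Set.singleton_subset_iff.mpr hxV)))
end

section
/- Let U be a nonempty convex subset of a separated locally convex space X and x ∈ X. Then x ∈ qi(U) if and only if x ∈ qri(U) and 0 ∈ qi(U - U). -/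
open Set Pointwise Topology

theorem qi_iff_qri_and_qi_sub
    {X : Type*} [AddCommGroup X] [Module ℝ X] [TopologicalSpace X]
    [IsTopologicalAddGroup X] [ContinuousSMul ℝ X] [LocallyConvexSpace ℝ X] [T2Space X]
    (U : Set X) (hne : U.Nonempty) (hconv : Convex ℝ U) (x : X) :
    x ∈ qi U ↔ x ∈ qri U ∧ (0 : X) ∈ qi (U - U) := by
  constructor
  · rintro ⟨hxU, hcl⟩
    refine ⟨⟨hxU, ⊤, by simpa using hcl⟩, ?_, ?_⟩
    · simpa using sub_mem_sub hxU hxU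
    · have hUU : (U - U) - ({0} : Set X) = U - U := by simp
      rw [hUU]
      have hsub : coneHull (U - ({x} : Set X)) ⊆ coneHull (U - U) := by
        rintro y ⟨t, ht, s, hs, rfl⟩
        rcases hs with ⟨u, hu, z, hz, rfl⟩
        rw [Set.mem_singleton_iff] at hz
        exact ⟨t, ht, u - z, hz ▸ sub_mem_sub hu hxU, rfl⟩
      apply Set.eq_univ_of_univ_subset
      calc Set.univ = closure (coneHull (U - ({x} : Set X))) := hcl.symm
        _ ⊆ closure (coneHull (U - U)) := closure_mono hsub
  · rintro ⟨⟨hxU, M, hM⟩, _, h0⟩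
    refine ⟨hxU, ?_⟩
    have hUU : (U - U) - ({0} : Set X) = U - U := by simp
    rw [hUU] at h0
    have hMc : IsClosed (M : Set X) := hM ▸ isClosed_closure
    have hin : coneHull (U - ({x} : Set X)) ⊆ (M : Set X) := hM ▸ subset_closure
    have hsub : coneHull (U - U) ⊆ (M : Set X) := by
      rintro y ⟨t, ht, s, hs, rfl⟩
      rcases hs with ⟨u, hu, v, hv, rfl⟩
      have h1 : t • (u - x) ∈ M := hin ⟨t, ht, u - x, ⟨u, hu, x, rfl, rfl⟩, rfl⟩
      have h2 : t • (v - x) ∈ M := hin ⟨t, ht, v - x, ⟨v, hv, x, rfl, rfl⟩, rfl⟩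
      have : t • (u - v) = t • (u - x) - t • (v - x) := by
        rw [← smul_sub]; congr 1; abel
      rw [this]
      exact M.sub_mem h1 h2
    have hMuniv : (M : Set X) = Set.univ := by
      apply Set.eq_univ_of_univ_subset
      calc Set.univ = closure (coneHull (U - U)) := h0.symm
        _ ⊆ closure (M : Set X) := closure_mono hsub
        _ = (M : Set X) := hMc.closure_eq
    rw [hM, hMuniv]
end

section
/- Let U be a nonempty convex subset of a separated locally convex space X and x ∈ U. If there exists a nonzero continuous linear functional x* ∈ X* with ⟨x*, y⟩ ≤ ⟨x*, x⟩ for all y ∈ U, and moreover 0 ∈ qi(U - U), then x ∉ qri(U). -/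
open Set Pointwise Topology

theorem not_mem_qri_of_separation
    {X : Type*} [AddCommGroup X] [Module ℝ X] [TopologicalSpace X]
    [IsTopologicalAddGroup X] [ContinuousSMul ℝ X] [LocallyConvexSpace ℝ X] [T2Space X]
    (U : Set X) (hne : U.Nonempty) (hconv : Convex ℝ U) (x : X) (hx : x ∈ U)
    (hsep : ∃ f : X →L[ℝ] ℝ, f ≠ 0 ∧ ∀ y ∈ U, f y ≤ f x)
    (hqi : (0 : X) ∈ qi (U - U)) :
    x ∉ qri U := by

  rintro ⟨hxU, M, hM⟩
  obtain ⟨f, hf0, hfle⟩ := hsep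
  -- M is closed
  have hMclosed : IsClosed (M : Set X) := hM ▸ isClosed_closure
  -- coneHull (U - {x}) ⊆ {z | f z ≤ 0}
  have hcone : coneHull (U - {x}) ⊆ {z | f z ≤ 0} := by
    rintro z ⟨t, ht, s, hs, rfl⟩
    obtain ⟨a, ha, b, hb, rfl⟩ := hs
    rcases hb with rfl
    have : f (a - b) ≤ 0 := by
      simp only [map_sub]
      linarith [hfle a ha]
    simpa using mul_nonpos_of_nonneg_of_nonpos ht this
  have hMle : (M : Set X) ⊆ {z | f z ≤ 0} := by
    rw [← hM]
    have : IsClosed {z : X | f z ≤ 0} := isClosed_le (f.continuous) continuous_const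
    exact closure_minimal hcone this
  have hMker : ∀ z ∈ M, f z = 0 := by
    intro z hz
    have h1 : f z ≤ 0 := hMle hz
    have h2 : f (-z) ≤ 0 := hMle (M.neg_mem hz)
    simp only [map_neg] at h2
    linarith
  -- U - U ⊆ M
  have hsub : ∀ u ∈ U, u - x ∈ M := by
    intro u hu
    have : u - x ∈ closure (coneHull (U - {x})) :=
      subset_closure ⟨1, zero_le_one, u - x, ⟨u, hu, x, rfl, rfl⟩, (one_smul ℝ _).symm⟩
    rwa [hM] at this
  have hUU : U - U ⊆ (M : Set X) := by
    rintro z ⟨u, hu, v, hv, rfl⟩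
    have : (u - x) - (v - x) ∈ M := M.sub_mem (hsub u hu) (hsub v hv)
    simpa using this
  have hcone2 : coneHull ((U - U) - {0}) ⊆ (M : Set X) := by
    rintro z ⟨t, ht, s, hs, rfl⟩
    obtain ⟨a, ha, b, hb, rfl⟩ := hs
    rcases hb with rfl
    have : a - 0 ∈ M := by simpa using hUU ha
    exact M.smul_mem t this
  have : (Set.univ : Set X) ⊆ (M : Set X) := by
    rw [← hqi.2]
    exact closure_minimal hcone2 hMclosed
  obtain ⟨z, hz⟩ := DFunLike.ne_iff.mp hf0
  exact hz (hMker z (this (mem_univ z)))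
end

section
/- For 1 ≤ p < ∞, the interior, algebraic interior (core), strong quasi-relative interior, and relative algebraic interior (intrinsic core) of the positive cone ℓ^p_+ in ℓ^p(ℕ) are all empty. -/
open Set Pointwise Topology

open Filter in
theorem lp_cone_key (p : ENNReal) [Fact (1 ≤ p)] (hp : p ≠ ⊤)
    (x : lp (fun _ : ℕ => ℝ) p) (hx : ∀ n : ℕ, 0 ≤ x n)
    (M : Submodule ℝ (lp (fun _ : ℕ => ℝ) p))
    (hM : coneHull ({y : lp (fun _ : ℕ => ℝ) p | ∀ n : ℕ, 0 ≤ y n} - {x}) = (M : Set _)) :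
    False := by
  classical
  set U : Set (lp (fun _ : ℕ => ℝ) p) := {y | ∀ n : ℕ, 0 ≤ y n} with hU
  have hq : 1 ≤ p.toReal := by
    have h1 := Fact.out (p := 1 ≤ p)
    simpa using ENNReal.toReal_mono hp h1
  have hq0 : 0 < p.toReal := lt_of_lt_of_le one_pos hq
  -- x n → 0
  have hsum := (lp.memℓp x).summable hq0
  have htend : Tendsto (fun n => ‖x n‖ ^ p.toReal) atTop (nhds 0) := hsum.tendsto_atTop_zero
  have hx0 : Tendsto (fun n => x n) atTop (nhds 0) := by
    have h1 : Tendsto (fun n => (‖x n‖ ^ p.toReal) ^ (p.toReal)⁻¹) atTop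
        (nhds ((0:ℝ) ^ (p.toReal)⁻¹)) := htend.rpow_const (Or.inr (by positivity))
    have h2 : (fun n => (‖x n‖ ^ p.toReal) ^ (p.toReal)⁻¹) = fun n => x n := by
      funext n
      rw [← Real.rpow_mul (norm_nonneg _), mul_inv_cancel₀ hq0.ne', Real.rpow_one,
        Real.norm_of_nonneg (hx n)]
    rw [Real.zero_rpow (by positivity), h2] at h1
    exact h1
  -- choose sparse subsequence
  have key : ∀ k N : ℕ, ∃ n, N ≤ n ∧ x n < (4:ℝ)⁻¹ ^ k := by
    intro k N
    have h4 : (0:ℝ) < (4:ℝ)⁻¹ ^ k := by positivity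
    obtain ⟨m, hm⟩ := (eventually_atTop.mp (hx0.eventually_lt_const h4))
    exact ⟨max m N, le_max_right _ _, hm _ (le_max_left _ _)⟩
  choose f hf1 hf2 using key
  set σ : ℕ → ℕ := fun k => Nat.rec (f 0 0) (fun k ih => f (k+1) (ih+1)) k with hσ
  have hσsucc : ∀ k, σ (k+1) = f (k+1) (σ k + 1) := fun k => rfl
  have hσmono : StrictMono σ := strictMono_nat_of_lt_succ (fun k => by
    rw [hσsucc]; exact lt_of_lt_of_le (Nat.lt_succ_self _) (hf1 (k+1) (σ k + 1)))
  have hσx : ∀ k, x (σ k) < (4:ℝ)⁻¹ ^ k := by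
    intro k
    cases k with
    | zero => exact hf2 0 0
    | succ k => rw [hσsucc]; exact hf2 (k+1) (σ k + 1)
  -- the perturbation d
  set d : ℕ → ℝ := fun n => if h : ∃ k, σ k = n then (2:ℝ)⁻¹ ^ h.choose else 0 with hd
  have hdσ : ∀ k, d (σ k) = (2:ℝ)⁻¹ ^ k := by
    intro k
    have h : ∃ j, σ j = σ k := ⟨k, rfl⟩
    simp only [hd, dif_pos h]
    congr 1
    exact hσmono.injective h.choose_spec
  have hd0 : ∀ n, 0 ≤ d n := by
    intro n; simp only [hd]; split <;> positivity
  have hdmem : Memℓp d p := by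
    apply memℓp_gen
    have hvan : ∀ n ∉ Set.range σ, ‖d n‖ ^ p.toReal = 0 := by
      intro n hn
      have : ¬ ∃ k, σ k = n := by simpa [Set.range] using hn
      simp only [hd, dif_neg this, norm_zero]
      exact Real.zero_rpow hq0.ne'
    rw [← hσmono.injective.summable_iff hvan]
    have hcomp : ∀ k, ((fun n => ‖d n‖ ^ p.toReal) ∘ σ) k = ((2:ℝ)⁻¹ ^ p.toReal) ^ k := by
      intro k
      simp only [Function.comp, hdσ k, Real.norm_of_nonneg (by positivity : (0:ℝ) ≤ (2:ℝ)⁻¹ ^ k)]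
      rw [← Real.rpow_natCast ((2:ℝ)⁻¹) k, ← Real.rpow_mul (by norm_num), mul_comm,
        Real.rpow_mul (by norm_num), Real.rpow_natCast]
    rw [funext hcomp]
    exact summable_geometric_of_lt_one (by positivity)
      (Real.rpow_lt_one (by norm_num) (by norm_num) hq0)
  set dl : lp (fun _ : ℕ => ℝ) p := ⟨d, hdmem⟩ with hdl
  have hdlcoe : ∀ n, dl n = d n := fun n => rfl
  -- dl ∈ coneHull (U - {x})
  have hwU : x + dl ∈ U := by
    intro n
    have : (x + dl) n = x n + d n := by rw [lp.coeFn_add]; rfl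
    rw [this]
    exact add_nonneg (hx n) (hd0 n)
  have hdl_mem : dl ∈ coneHull (U - {x}) := by
    refine ⟨1, zero_le_one, dl, ?_, (one_smul ℝ dl).symm⟩
    exact ⟨x + dl, hwU, x, rfl, by simp⟩
  -- hence -dl ∈ coneHull (U - {x})
  have hneg : -dl ∈ coneHull (U - {x}) := by
    rw [hM] at hdl_mem ⊢
    exact M.neg_mem hdl_mem
  obtain ⟨t, ht, s, hs, heq⟩ := hneg
  obtain ⟨u, hu, x', hx'mem, hux⟩ := hs
  rw [Set.mem_singleton_iff] at hx'mem
  rw [hx'mem] at hux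
  rw [← hux] at heq
  -- pointwise
  have hpt : ∀ n, -(d n) = t * (u n - x n) := by
    intro n
    have h0 := congrFun (congrArg (Subtype.val) heq) n
    have e1 : (-dl : lp (fun _ : ℕ => ℝ) p) n = -(d n) := by
      rw [lp.coeFn_neg]; rfl
    have e2 : (t • (u - x) : lp (fun _ : ℕ => ℝ) p) n = t * (u n - x n) := by
      rw [lp.coeFn_smul]
      have : (u - x : lp (fun _ : ℕ => ℝ) p) n = u n - x n := by rw [lp.coeFn_sub]; rfl
      change t * ((u - x : lp (fun _ : ℕ => ℝ) p) n) = _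
      rw [this]
    rw [e1, e2] at h0
    exact h0
  have ht0 : 0 < t := by
    rcases ht.lt_or_eq with h | h
    · exact h
    · exfalso
      have := hpt (σ 0)
      rw [hdσ 0, ← h] at this
      norm_num at this
  have hbound : ∀ k, (2:ℝ)⁻¹ ^ k ≤ t * x (σ k) := by
    intro k
    have h1 := hpt (σ k)
    have h2 := hu (σ k)
    rw [hdσ k] at h1
    nlinarith
  obtain ⟨k, hk⟩ := pow_unbounded_of_one_lt t (by norm_num : (1:ℝ) < 2)
  have h1 := hbound k
  have h2 := hσx k
  have h3 : (4:ℝ)⁻¹ ^ k = (2:ℝ)⁻¹ ^ k * (2:ℝ)⁻¹ ^ k := by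
    rw [← mul_pow]; norm_num
  have h4 : (0:ℝ) < (2:ℝ)⁻¹ ^ k := by positivity
  have h5 : (2:ℝ) ^ k * (2:ℝ)⁻¹ ^ k = 1 := by
    rw [← mul_pow]; norm_num
  nlinarith [mul_lt_mul_of_pos_left h2 ht0]

theorem interiors_of_lp_positive_cone_empty (p : ENNReal) [Fact (1 ≤ p)] (hp : p ≠ ⊤) :
    interior {x : lp (fun _ : ℕ => ℝ) p | ∀ n : ℕ, 0 ≤ x n} = ∅ ∧
    algCore {x : lp (fun _ : ℕ => ℝ) p | ∀ n : ℕ, 0 ≤ x n} = ∅ ∧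
    sqri {x : lp (fun _ : ℕ => ℝ) p | ∀ n : ℕ, 0 ≤ x n} = ∅ ∧
    icr {x : lp (fun _ : ℕ => ℝ) p | ∀ n : ℕ, 0 ≤ x n} = ∅ := by
  set U : Set (lp (fun _ : ℕ => ℝ) p) := {x | ∀ n : ℕ, 0 ≤ x n} with hU
  have hicr : icr U = ∅ := by
    rw [Set.eq_empty_iff_forall_notMem]
    rintro x ⟨hxU, M, hM⟩
    exact lp_cone_key p hp x hxU M hM
  have hcore : algCore U = ∅ := by
    rw [Set.eq_empty_iff_forall_notMem]
    rintro x ⟨hxU, hcone⟩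
    refine lp_cone_key p hp x hxU ⊤ ?_
    rw [hcone, Submodule.top_coe]
  have hsqri : sqri U = ∅ := by
    rw [Set.eq_empty_iff_forall_notMem]
    rintro x ⟨hxU, M, hM, _⟩
    exact lp_cone_key p hp x hxU M hM
  refine ⟨?_, hcore, hsqri, hicr⟩
  -- interior ⊆ algCore
  rw [Set.eq_empty_iff_forall_notMem]
  intro x hxint
  obtain ⟨ε, hε, hball⟩ := Metric.mem_nhds_iff.mp (mem_interior_iff_mem_nhds.mp hxint)
  have hxU : x ∈ U := hball (Metric.mem_ball_self hε)
  refine lp_cone_key p hp x hxU ⊤ ?_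
  rw [Submodule.top_coe]
  rw [Set.eq_univ_iff_forall]
  intro v
  set c : ℝ := ε / (2 * (‖v‖ + 1)) with hc
  have hvpos : (0:ℝ) < ‖v‖ + 1 := by positivity
  have hcpos : 0 < c := by positivity
  have hnorm : ‖c • v‖ < ε := by
    rw [norm_smul, Real.norm_of_nonneg hcpos.le, hc]
    rw [div_mul_eq_mul_div, div_lt_iff₀ (by positivity)]
    nlinarith [norm_nonneg v]
  have hmem : x + c • v ∈ U := by
    apply hball
    rw [Metric.mem_ball, dist_eq_norm]
    simpa using hnorm
  refine ⟨c⁻¹, by positivity, (x + c • v) - x, ⟨x + c • v, hmem, x, rfl, by simp⟩, ?_⟩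
  rw [add_sub_cancel_left, inv_smul_smul₀ hcpos.ne']
end

section
/- Let U be a nonempty convex subset of a separated locally convex space X. If qi(U) ≠ ∅, then qi(U) = qri(U). -/
open Set Pointwise Topology

theorem qi_eq_qri_of_qi_nonempty
    {X : Type*} [AddCommGroup X] [Module ℝ X] [TopologicalSpace X]
    [IsTopologicalAddGroup X] [ContinuousSMul ℝ X] [LocallyConvexSpace ℝ X] [T2Space X]
    (U : Set X) (hne : U.Nonempty) (hconv : Convex ℝ U) (hqi : (qi U).Nonempty) :
    qi U = qri U := by
  obtain ⟨a, haU, ha⟩ := hqi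
  ext x
  constructor
  · rintro ⟨hx, hcl⟩
    exact ⟨hx, ⊤, by simpa using hcl⟩
  · rintro ⟨hx, M, hM⟩
    refine ⟨hx, ?_⟩
    by_contra hne'
    have hMclosed : IsClosed (M : Set X) := hM ▸ isClosed_closure
    have hp : ∃ p, p ∉ M := by
      by_contra h
      push_neg at h
      exact hne' (hM.trans (Set.eq_univ_of_forall h))
    obtain ⟨p, hp⟩ := hp
    obtain ⟨f, u, hfu, hup⟩ := geometric_hahn_banach_closed_point M.convex hMclosed hp
    have hu0 : 0 < u := by simpa using hfu 0 M.zero_mem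
    have hf0 : ∀ m ∈ M, f m = 0 := by
      intro m hm
      by_contra h0
      have h1 : f (((u + 1) / f m) • m) < u := hfu _ (M.smul_mem _ hm)
      rw [map_smul, smul_eq_mul, div_mul_cancel₀ _ h0] at h1
      linarith
    have hsubM : ∀ y ∈ U, f y = f x := by
      intro y hy
      have hmem : y - x ∈ (M : Set X) := by
        rw [← hM]
        exact subset_closure ⟨1, zero_le_one, y - x, Set.sub_mem_sub hy rfl,
          (one_smul _ _).symm⟩
      have := hf0 _ hmem
      rw [map_sub, sub_eq_zero] at this
      exact this
    have hker : closure (coneHull (U - {a})) ⊆ {z | f z = 0} := by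
      apply closure_minimal
      · rintro z ⟨t, ht, s, hs, rfl⟩
        obtain ⟨y, hy, b, hb, rfl⟩ := hs
        rcases hb with rfl
        show f (t • (y - b)) = 0
        rw [map_smul, smul_eq_mul, map_sub, hsubM y hy, hsubM b haU, sub_self, mul_zero]
      · exact isClosed_eq f.continuous continuous_const
    have hp0 : f p = 0 := by
      have h2 := hker
      rw [ha] at h2
      exact h2 (Set.mem_univ p)
    linarith
end

section
/- Let Φ : X × Y → ℝ ∪ {±∞} be proper with v := inf_x Φ(x,0) ∈ ℝ. If strong duality holds for the pair inf_x Φ(x,0) and sup_{y*} (−Φ*(0,y*)) (equal values with dual attainment), then (0,0) ∉ qi(co(pr_{Y×ℝ}(epi(Φ − v)) ∪ {(0,0)})). -/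
open Set Pointwise Topology

theorem not_qi_of_strong_duality
    {X Y : Type*}
    [AddCommGroup X] [Module ℝ X] [TopologicalSpace X] [IsTopologicalAddGroup X]
    [ContinuousSMul ℝ X] [LocallyConvexSpace ℝ X] [T2Space X]
    [AddCommGroup Y] [Module ℝ Y] [TopologicalSpace Y] [IsTopologicalAddGroup Y]
    [ContinuousSMul ℝ Y] [LocallyConvexSpace ℝ Y] [T2Space Y]
    (Φ : X × Y → EReal)
    (hbot : ∀ p, Φ p ≠ ⊥) (hdom : ∃ p, Φ p ≠ ⊤)
    (v : ℝ) (hv : (⨅ x : X, Φ (x, 0)) = (v : EReal))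
    (hstrong : ∃ ystar : Y →L[ℝ] ℝ,
      -(⨆ p : X × Y, ((ystar p.2 : ℝ) : EReal) - Φ p) = (v : EReal)) :
    ((0 : Y), (0 : ℝ)) ∉ qi (convexHull ℝ
      ({p : Y × ℝ | ∃ x : X, Φ (x, p.1) ≤ ((p.2 + v : ℝ) : EReal)} ∪ {(0, 0)})) := by
  obtain ⟨ystar, hy⟩ := hstrong
  set g : Y × ℝ →L[ℝ] ℝ :=
    ContinuousLinearMap.snd ℝ Y ℝ - ystar.comp (ContinuousLinearMap.fst ℝ Y ℝ) with hgdef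
  have hgval : ∀ p : Y × ℝ, g p = p.2 - ystar p.1 := fun p => rfl
  -- sup = -v
  have hsup : (⨆ p : X × Y, ((ystar p.2 : ℝ) : EReal) - Φ p) = ((-v : ℝ) : EReal) := by
    rw [EReal.coe_neg, ← hy, neg_neg]
  -- key pointwise bound
  have key : ∀ y : Y, ∀ r : ℝ, (∃ x : X, Φ (x, y) ≤ ((r + v : ℝ) : EReal)) → ystar y ≤ r := by
    rintro y r ⟨x, hx⟩
    have hterm : ((ystar y : ℝ) : EReal) - Φ (x, y) ≤ ((-v : ℝ) : EReal) := by
      rw [← hsup]; exact le_iSup (fun p : X × Y => ((ystar p.2 : ℝ) : EReal) - Φ p) (x, y)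
    have hnt : Φ (x, y) ≠ ⊤ := fun h => by
      rw [h, top_le_iff] at hx; exact EReal.coe_ne_top _ hx
    obtain ⟨c, hc⟩ : ∃ c : ℝ, Φ (x, y) = (c : EReal) :=
      ⟨(Φ (x, y)).toReal, (EReal.coe_toReal hnt (hbot _)).symm⟩
    rw [hc] at hx hterm
    rw [← EReal.coe_sub, EReal.coe_le_coe_iff] at hterm
    rw [EReal.coe_le_coe_iff] at hx
    linarith
  -- the half-space
  set H : Set (Y × ℝ) := {p | 0 ≤ g p} with hHdef
  have hHconv : Convex ℝ H := convex_halfSpace_ge (g.toLinearMap.isLinear) 0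
  have hHclosed : IsClosed H := isClosed_le continuous_const g.continuous
  have hUH : ({p : Y × ℝ | ∃ x : X, Φ (x, p.1) ≤ ((p.2 + v : ℝ) : EReal)} ∪ {(0, 0)}) ⊆ H := by
    rintro p (hp | hp)
    · have := key p.1 p.2 hp
      simp only [hHdef, Set.mem_setOf_eq, hgval]; linarith
    · simp only [Set.mem_singleton_iff] at hp
      subst hp
      simp [hHdef, hgval]
  have hhullH : convexHull ℝ
      ({p : Y × ℝ | ∃ x : X, Φ (x, p.1) ≤ ((p.2 + v : ℝ) : EReal)} ∪ {(0, 0)}) ⊆ H :=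
    convexHull_min hUH hHconv
  rintro ⟨-, hcl⟩
  have hconeH : coneHull (convexHull ℝ
      ({p : Y × ℝ | ∃ x : X, Φ (x, p.1) ≤ ((p.2 + v : ℝ) : EReal)} ∪ {(0, 0)})
        - {((0 : Y), (0 : ℝ))}) ⊆ H := by
    rintro z ⟨t, ht, s, hs, rfl⟩
    obtain ⟨u, hu, w, hw, rfl⟩ := hs
    simp only [Set.mem_singleton_iff] at hw
    subst hw
    have hgu : 0 ≤ g u := hhullH hu
    have h1 : g (t • (u - ((0, 0) : Y × ℝ))) = t * g u := by
      rw [show ((0, 0) : Y × ℝ) = 0 from rfl, sub_zero, g.map_smul]; rfl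
    simpa [hHdef, h1] using mul_nonneg ht hgu
  have hclH : closure (coneHull (convexHull ℝ
      ({p : Y × ℝ | ∃ x : X, Φ (x, p.1) ≤ ((p.2 + v : ℝ) : EReal)} ∪ {(0, 0)})
        - {((0 : Y), (0 : ℝ))})) ⊆ H := closure_minimal hconeH hHclosed
  rw [hcl] at hclH
  have : ((0 : Y), (-1 : ℝ)) ∈ H := hclH (Set.mem_univ _)
  simp [hHdef, hgval] at this
  linarith
end

section
/- Let X = ℓ²(ℕ), C = {x ∈ ℓ² : x_{2n−1} + x_{2n} = 0 ∀n} and S = {x ∈ ℓ² : x_{2n} + x_{2n+1} = 0 ∀n}. Then C and S are closed linear subspaces of ℓ², C ∩ S = {0}, and C − S is dense in ℓ² (hence 0 ∈ qi(C − S)) but C − S ≠ ℓ². -/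
open Set Pointwise Topology

open Filter
open scoped ENNReal NNReal

noncomputable section GT

abbrev L2 := lp (fun _ : ℕ => ℝ) 2

lemma toReal_two : (2 : ℝ≥0∞).toReal = 2 := by norm_num

lemma rpow_toReal_two (x : ℝ) : x ^ (2 : ℝ≥0∞).toReal = x ^ (2 : ℕ) := by
  rw [toReal_two, show ((2:ℝ)) = ((2:ℕ):ℝ) by norm_num, Real.rpow_natCast]

lemma summable_sq (x : L2) : Summable fun n => ‖(x : ℕ → ℝ) n‖ ^ (2:ℕ) := by
  have h := (lp.memℓp x).summable (by rw [toReal_two]; norm_num)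
  simpa only [rpow_toReal_two] using h

lemma eval_cont (i : ℕ) : Continuous fun x : L2 => (x : ℕ → ℝ) i := by
  refine (LipschitzWith.of_dist_le_mul (K := 1) fun x y => ?_).continuous
  rw [NNReal.coe_one, one_mul, dist_eq_norm, dist_eq_norm]
  have h := lp.norm_apply_le_norm (by norm_num : (2:ℝ≥0∞) ≠ 0) (x - y) i
  have h2 : ((x - y : L2) : ℕ → ℝ) i = (x : ℕ → ℝ) i - (y : ℕ → ℝ) i := by
    rw [lp.coeFn_sub]; rfl
  rw [← h2]; exact h

def Msub : Submodule ℝ L2 where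
  carrier := {x : L2 | ∀ n : ℕ, x (2 * n) + x (2 * n + 1) = 0}
  add_mem' := by
    intro a b ha hb n
    have h1 := ha n; have h2 := hb n
    simp only [lp.coeFn_add, Pi.add_apply] at *
    linarith
  zero_mem' := by intro n; simp
  smul_mem' := by
    intro c a ha n
    have h1 := ha n
    simp only [lp.coeFn_smul, Pi.smul_apply, smul_eq_mul] at *
    rw [← mul_add, h1, mul_zero]

def Nsub : Submodule ℝ L2 where
  carrier := {x : L2 | ∀ n : ℕ, x (2 * n + 1) + x (2 * n + 2) = 0}
  add_mem' := by
    intro a b ha hb n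
    have h1 := ha n; have h2 := hb n
    simp only [lp.coeFn_add, Pi.add_apply] at *
    linarith
  zero_mem' := by intro n; simp
  smul_mem' := by
    intro c a ha n
    have h1 := ha n
    simp only [lp.coeFn_smul, Pi.smul_apply, smul_eq_mul] at *
    rw [← mul_add, h1, mul_zero]

lemma closed_M : IsClosed (Msub : Set L2) := by
  have h : (Msub : Set L2) = ⋂ n : ℕ, {x : L2 | (x : ℕ → ℝ) (2*n) + x (2*n+1) = 0} := by
    ext x; simp only [Set.mem_iInter, Set.mem_setOf_eq]; rfl
  rw [h]
  exact isClosed_iInter fun n =>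
    isClosed_eq ((eval_cont _).add (eval_cont _)) continuous_const

lemma closed_N : IsClosed (Nsub : Set L2) := by
  have h : (Nsub : Set L2) = ⋂ n : ℕ, {x : L2 | (x : ℕ → ℝ) (2*n+1) + x (2*n+2) = 0} := by
    ext x; simp only [Set.mem_iInter, Set.mem_setOf_eq]; rfl
  rw [h]
  exact isClosed_iInter fun n =>
    isClosed_eq ((eval_cont _).add (eval_cont _)) continuous_const

lemma inter_eq : (Msub : Set L2) ∩ (Nsub : Set L2) = {0} := by
  apply Set.Subset.antisymm
  · rintro x ⟨hM, hN⟩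
    have hM' : ∀ n : ℕ, (x : ℕ → ℝ) (2*n) + x (2*n+1) = 0 := hM
    have hN' : ∀ n : ℕ, (x : ℕ → ℝ) (2*n+1) + x (2*n+2) = 0 := hN
    have hstep : ∀ n : ℕ, (x : ℕ → ℝ) (n+1) = -(x : ℕ → ℝ) n := by
      intro n
      rcases Nat.even_or_odd n with ⟨k, hk⟩ | ⟨k, hk⟩
      · have := hM' k; subst hk; rw [two_mul] at this; linarith
      · have := hN' k; subst hk
        have h2 : 2 * k + 1 + 1 = 2 * k + 2 := by ring
        rw [h2] at this
        linarith
    have habs : ∀ n : ℕ, ‖(x : ℕ → ℝ) n‖ = ‖(x : ℕ → ℝ) 0‖ := by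
      intro n; induction n with
      | zero => rfl
      | succ k ih => rw [hstep k, norm_neg, ih]
    have hsum := summable_sq x
    have heq : (fun n => ‖(x : ℕ → ℝ) n‖ ^ (2:ℕ)) = fun _ : ℕ => ‖(x : ℕ → ℝ) 0‖ ^ (2:ℕ) := by
      funext n; rw [habs n]
    rw [heq, summable_const_iff] at hsum
    have hx0 : (x : ℕ → ℝ) 0 = 0 := by
      have : ‖(x : ℕ → ℝ) 0‖ = 0 := by nlinarith [norm_nonneg ((x : ℕ → ℝ) 0)]
      simpa using this
    have hall : ∀ n, (x : ℕ → ℝ) n = 0 := by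
      intro n; induction n with
      | zero => exact hx0
      | succ k ih => rw [hstep k, ih, neg_zero]
    have : x = 0 := by
      apply lp.ext; funext n; exact hall n
    simp [this]
  · rintro x rfl
    exact ⟨Msub.zero_mem, Nsub.zero_mem⟩

/-- Any finitely supported element of ℓ² is in M - N. -/
lemma mem_sub_of_fin (z : L2) (m : ℕ) (hz : ∀ n, m ≤ n → (z : ℕ → ℝ) n = 0) :
    z ∈ (Msub : Set L2) - (Nsub : Set L2) := by
  set g : ℕ → ℝ := fun k => (z : ℕ → ℝ) (2*k+1) + (z : ℕ → ℝ) (2*k+2) with hg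
  set U : ℕ → ℝ := fun n =>
    (if n % 2 = 0 then (1:ℝ) else -1) * (-(∑ k ∈ Finset.Ico (n/2) m, g k)) with hU
  have hUzero : ∀ n, n ∉ Finset.range (2*m) → U n = 0 := by
    intro n hn
    rw [Finset.mem_range, not_lt] at hn
    have hnd : m ≤ n / 2 := by omega
    simp [hU, Finset.Ico_eq_empty (not_lt.mpr hnd)]
  have hUmem : Memℓp U 2 := by
    apply memℓp_gen
    apply summable_of_ne_finset_zero (s := Finset.range (2*m))
    intro b hb
    rw [hUzero b hb, rpow_toReal_two]
    simp
  set u : L2 := ⟨U, hUmem⟩ with hu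
  have hucoe : (u : ℕ → ℝ) = U := rfl
  have huM : u ∈ Msub := by
    intro n
    have h1 : (2*n) % 2 = 0 := by omega
    have h2 : (2*n) / 2 = n := by omega
    have h3 : (2*n+1) % 2 = 1 := by omega
    have h4 : (2*n+1) / 2 = n := by omega
    show U (2*n) + U (2*n+1) = 0
    rw [hU]; simp only [h1, h2, h3, h4]
    norm_num
  have hvN : u - z ∈ Nsub := by
    intro n
    show ((u - z : L2) : ℕ → ℝ) (2*n+1) + ((u - z : L2) : ℕ → ℝ) (2*n+2) = 0
    rw [lp.coeFn_sub]
    simp only [Pi.sub_apply, hucoe]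
    have h3 : (2*n+1) % 2 = 1 := by omega
    have h4 : (2*n+1) / 2 = n := by omega
    have h5 : (2*n+2) % 2 = 0 := by omega
    have h6 : (2*n+2) / 2 = n + 1 := by omega
    have hkey : U (2*n+1) + U (2*n+2) = (z : ℕ → ℝ) (2*n+1) + (z : ℕ → ℝ) (2*n+2) := by
      rw [hU]; simp only [h3, h4, h5, h6]
      norm_num
      rcases lt_or_ge n m with hnm | hnm
      · rw [Finset.sum_eq_sum_Ico_succ_bot hnm g]
        rw [hg]; ring
      · rw [Finset.Ico_eq_empty (by omega), Finset.Ico_eq_empty (by omega)]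
        rw [hz (2*n+1) (by omega), hz (2*n+2) (by omega)]
        simp
    linarith
  refine Set.mem_sub.mpr ⟨u, huM, u - z, hvN, by abel⟩

lemma dense_sub : Dense ((Msub : Set L2) - (Nsub : Set L2)) := by
  intro x
  have hs := (lp.hasSum_single (by norm_num : (2:ℝ≥0∞) ≠ ⊤) x).tendsto_sum_nat
  refine mem_closure_of_tendsto hs (Filter.Eventually.of_forall fun n => ?_)
  apply mem_sub_of_fin _ n
  intro j hj
  rw [lp.coeFn_sum]
  simp only [Finset.sum_apply]
  apply Finset.sum_eq_zero
  intro i hi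
  rw [Finset.mem_range] at hi
  rw [lp.single_apply]
  rw [Pi.single_apply, if_neg (by omega)]

lemma coneHull_sub : coneHull ((Msub : Set L2) - (Nsub : Set L2))
    = (Msub : Set L2) - (Nsub : Set L2) := by
  ext x
  constructor
  · rintro ⟨t, ht, s, hs, rfl⟩
    rcases Set.mem_sub.mp hs with ⟨a, ha, b, hb, rfl⟩
    exact Set.mem_sub.mpr ⟨t • a, Msub.smul_mem t ha, t • b, Nsub.smul_mem t hb,
      (smul_sub t a b).symm⟩
  · intro hx
    exact ⟨1, zero_le_one, x, hx, (one_smul ℝ x).symm⟩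

/-- The witness sequence not in M - N. -/
def Zfun : ℕ → ℝ := fun n => if n % 2 = 1 then 2 / ((n:ℝ) + 1) else 0

lemma Zmem : Memℓp Zfun 2 := by
  apply memℓp_gen
  have hb : ∀ n : ℕ, ‖Zfun n‖ ^ (2:ℝ≥0∞).toReal ≤ 4 * (1 / ((n:ℝ)+1)^2) := by
    intro n
    rw [rpow_toReal_two]
    by_cases h : n % 2 = 1
    · simp only [Zfun, if_pos h]
      rw [Real.norm_eq_abs, abs_of_nonneg (by positivity), div_pow, mul_one_div]
      apply div_le_div_of_nonneg_right ?_ (by positivity)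
      norm_num
    · have hpos : (0:ℝ) ≤ 4 * (1 / ((n:ℝ)+1)^2) := by positivity
      simpa [Zfun, if_neg h] using hpos
  have hs : Summable (fun n : ℕ => 4 * (1 / ((n:ℝ)+1)^2)) := by
    apply Summable.mul_left
    have h := (summable_nat_add_iff (f := fun n : ℕ => 1 / (n:ℝ) ^ 2) 1).mpr
      (Real.summable_one_div_nat_pow.mpr one_lt_two)
    apply h.congr
    intro n
    push_cast
    ring
  exact Summable.of_nonneg_of_le (fun n => Real.rpow_nonneg (norm_nonneg _) _) hb hs

lemma not_univ : (Msub : Set L2) - (Nsub : Set L2) ≠ Set.univ := by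
  intro h
  have hz : (⟨Zfun, Zmem⟩ : L2) ∈ (Msub : Set L2) - (Nsub : Set L2) := by
    rw [h]; trivial
  rcases Set.mem_sub.mp hz with ⟨u, huM, v, hvN, huv⟩
  have hv : v = u - ⟨Zfun, Zmem⟩ := by rw [← huv]; abel
  subst hv
  have huM' : ∀ n : ℕ, (u : ℕ → ℝ) (2*n) + (u : ℕ → ℝ) (2*n+1) = 0 := huM
  have hvN' : ∀ n : ℕ, (u : ℕ → ℝ) (2*n+1) + (u : ℕ → ℝ) (2*n+2)
      = Zfun (2*n+1) + Zfun (2*n+2) := by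
    intro n
    have := hvN n
    have hc : ((u - ⟨Zfun, Zmem⟩ : L2) : ℕ → ℝ) = (u : ℕ → ℝ) - Zfun :=
      lp.coeFn_sub _ _
    rw [show ((u - (⟨Zfun, Zmem⟩ : L2) : L2) : ℕ → ℝ) (2*n+1)
      = (u : ℕ → ℝ) (2*n+1) - Zfun (2*n+1) from by rw [hc]; rfl] at this
    rw [show ((u - (⟨Zfun, Zmem⟩ : L2) : L2) : ℕ → ℝ) (2*n+2)
      = (u : ℕ → ℝ) (2*n+2) - Zfun (2*n+2) from by rw [hc]; rfl] at this
    linarith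
  have hrec : ∀ n : ℕ, (u : ℕ → ℝ) (2*(n+1)) = (u : ℕ → ℝ) (2*n) + 1/((n:ℝ)+1) := by
    intro n
    have h1 := huM' n
    have h2 := hvN' n
    have hZ1 : Zfun (2*n+1) = 1/((n:ℝ)+1) := by
      rw [Zfun]
      have : (2*n+1) % 2 = 1 := by omega
      rw [if_pos this]
      push_cast
      field_simp
      ring
    have hZ2 : Zfun (2*n+2) = 0 := by
      rw [Zfun]
      have : (2*n+2) % 2 = 0 := by omega
      rw [if_neg (by omega)]
    have h3 : 2*(n+1) = 2*n+2 := by ring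
    rw [h3]
    rw [hZ1, hZ2] at h2
    linarith
  have hformula : ∀ n : ℕ, (u : ℕ → ℝ) (2*n)
      = (u : ℕ → ℝ) 0 + ∑ i ∈ Finset.range n, 1/((i:ℝ)+1) := by
    intro n; induction n with
    | zero => simp
    | succ k ih =>
      rw [hrec k, ih, Finset.sum_range_succ]
      ring
  -- u(2n) → ∞
  have htop : Tendsto (fun n : ℕ => (u : ℕ → ℝ) (2*n)) atTop atTop := by
    have h1 : Tendsto (fun n : ℕ => (u : ℕ → ℝ) 0 + ∑ i ∈ Finset.range n, 1/((i:ℝ)+1))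
        atTop atTop :=
      tendsto_atTop_add_const_left _ _ Real.tendsto_sum_range_one_div_nat_succ_atTop
    exact h1.congr fun n => (hformula n).symm
  -- but ‖u n‖² summable ⇒ u(2n) → 0
  have hsum := summable_sq u
  have hsub : Summable fun n : ℕ => ‖(u : ℕ → ℝ) (2*n)‖ ^ (2:ℕ) :=
    hsum.comp_injective (fun a b h => by omega)
  have hzero := hsub.tendsto_atTop_zero
  have hlt := hzero.eventually (gt_mem_nhds (by norm_num : (0:ℝ) < 1))
  have hge := htop.eventually_ge_atTop 1
  rcases (hlt.and hge).exists with ⟨n, h1, h2⟩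
  have : (1:ℝ) ≤ ‖(u : ℕ → ℝ) (2*n)‖ ^ (2:ℕ) := by
    have : (1:ℝ) ≤ ‖(u : ℕ → ℝ) (2*n)‖ := le_trans h2 (le_abs_self _)
    nlinarith
  linarith

end GT

/-- C = {x ∈ ℓ² : x_{2n-1} + x_{2n} = 0 ∀ n ≥ 1}, in 0-based indexing. -/
theorem gowda_teboulle_example :
    ∃ M N : Submodule ℝ (lp (fun _ : ℕ => ℝ) 2),
      (M : Set (lp (fun _ : ℕ => ℝ) 2)) =
        {x : lp (fun _ : ℕ => ℝ) 2 | ∀ n : ℕ, x (2 * n) + x (2 * n + 1) = 0} ∧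
      (N : Set (lp (fun _ : ℕ => ℝ) 2)) =
        {x : lp (fun _ : ℕ => ℝ) 2 | ∀ n : ℕ, x (2 * n + 1) + x (2 * n + 2) = 0} ∧
      IsClosed (M : Set (lp (fun _ : ℕ => ℝ) 2)) ∧
      IsClosed (N : Set (lp (fun _ : ℕ => ℝ) 2)) ∧
      (M : Set (lp (fun _ : ℕ => ℝ) 2)) ∩ (N : Set (lp (fun _ : ℕ => ℝ) 2)) = {0} ∧
      Dense ((M : Set (lp (fun _ : ℕ => ℝ) 2)) - (N : Set (lp (fun _ : ℕ => ℝ) 2))) ∧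
      (0 : lp (fun _ : ℕ => ℝ) 2) ∈ qi ((M : Set (lp (fun _ : ℕ => ℝ) 2)) - (N : Set (lp (fun _ : ℕ => ℝ) 2))) ∧
      (M : Set (lp (fun _ : ℕ => ℝ) 2)) - (N : Set (lp (fun _ : ℕ => ℝ) 2)) ≠ Set.univ := by
  refine ⟨Msub, Nsub, rfl, rfl, closed_M, closed_N, inter_eq, dense_sub, ?_, not_univ⟩
  constructor
  · exact Set.mem_sub.mpr ⟨0, Msub.zero_mem, 0, Nsub.zero_mem, by abel⟩
  · have h0 : ((Msub : Set L2) - (Nsub : Set L2)) - ({0} : Set L2)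
        = (Msub : Set L2) - (Nsub : Set L2) := by
      rw [Set.sub_singleton]
      simp
    rw [h0, coneHull_sub]
    exact dense_iff_closure_eq.mp dense_sub
end

section
/- Let f, g : X → ℝ ∪ {+∞} be proper convex functions on a separated locally convex space X with dom f ∩ dom g ≠ ∅, and suppose there exists x' ∈ dom f ∩ dom g at which g is continuous. Then inf_{x∈X}{f(x)+g(x)} = max_{y*∈X*}{−f*(−y*) − g*(y*)}, i.e., Fenchel strong duality holds with dual attainment (assuming the infimum is finite). -/
open Set Pointwise Topology

private theorem fenchel_weak_dual
    {X : Type*} [AddCommGroup X] [Module ℝ X] [TopologicalSpace X]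
    (f g : X → EReal)
    (hfbot : ∀ x, f x ≠ ⊥) (hgbot : ∀ x, g x ≠ ⊥)
    (v : ℝ) (hv : (⨅ x : X, f x + g x) = (v : EReal))
    (zstar : X →L[ℝ] ℝ) :
    -(⨆ x : X, (((-zstar) x : ℝ) : EReal) - f x)
      - (⨆ x : X, ((zstar x : ℝ) : EReal) - g x) ≤ (v : EReal) := by
  set F := ⨆ x : X, (((-zstar) x : ℝ) : EReal) - f x with hF
  set G := ⨆ x : X, ((zstar x : ℝ) : EReal) - g x with hG
  have key : ∀ x : X, -F - G ≤ f x + g x := by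
    intro x
    by_cases hft : f x = ⊤
    · rw [hft, EReal.top_add_of_ne_bot (hgbot x)]; exact le_top
    by_cases hgt : g x = ⊤
    · rw [hgt, EReal.add_top_of_ne_bot (hfbot x)]; exact le_top
    have ha : f x = ((f x).toReal : EReal) := (EReal.coe_toReal hft (hfbot x)).symm
    have hb : g x = ((g x).toReal : EReal) := (EReal.coe_toReal hgt (hgbot x)).symm
    set a := (f x).toReal
    set b := (g x).toReal
    have hFx : (((-zstar) x : ℝ) : EReal) - f x ≤ F :=
      le_iSup (fun x => (((-zstar) x : ℝ) : EReal) - f x) x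
    have hGx : ((zstar x : ℝ) : EReal) - g x ≤ G :=
      le_iSup (fun x => ((zstar x : ℝ) : EReal) - g x) x
    rw [ha] at hFx
    rw [hb] at hGx
    have hFx' : ((-zstar x - a : ℝ) : EReal) ≤ F := by
      rw [EReal.coe_sub]
      simpa using hFx
    have hGx' : ((zstar x - b : ℝ) : EReal) ≤ G := by
      rw [EReal.coe_sub]; exact hGx
    have h1 : -F ≤ ((a + zstar x : ℝ) : EReal) := by
      rw [EReal.neg_le, ← EReal.coe_neg]
      calc ((-(a + zstar x) : ℝ) : EReal) = ((-zstar x - a : ℝ) : EReal) :=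
            EReal.coe_eq_coe_iff.2 (by ring)
        _ ≤ F := hFx'
    have h2 : -G ≤ ((b - zstar x : ℝ) : EReal) := by
      rw [EReal.neg_le, ← EReal.coe_neg]
      calc ((-(b - zstar x) : ℝ) : EReal) = ((zstar x - b : ℝ) : EReal) :=
            EReal.coe_eq_coe_iff.2 (by ring)
        _ ≤ G := hGx'
    calc -F - G = -F + -G := by rw [sub_eq_add_neg]
    _ ≤ ((a + zstar x : ℝ) : EReal) + ((b - zstar x : ℝ) : EReal) := add_le_add h1 h2
    _ = ((a + b : ℝ) : EReal) := by rw [← EReal.coe_add]; exact EReal.coe_eq_coe_iff.2 (by ring)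
    _ = f x + g x := by rw [ha, hb, EReal.coe_add]
  rw [← hv]
  exact le_iInf key


private theorem fenchel_main_aux
    {X : Type*} [AddCommGroup X] [Module ℝ X] [TopologicalSpace X]
    [IsTopologicalAddGroup X] [ContinuousSMul ℝ X]
    (f g : X → EReal)
    (hfbot : ∀ x, f x ≠ ⊥) (hgbot : ∀ x, g x ≠ ⊥)
    (hfconv : Convex ℝ {p : X × ℝ | f p.1 ≤ (p.2 : EReal)})
    (hgconv : Convex ℝ {p : X × ℝ | g p.1 ≤ (p.2 : EReal)})
    (x' : X) (hx'f : f x' ≠ ⊤) (hx'g : g x' ≠ ⊤) (hcont : ContinuousAt g x')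
    (v : ℝ) (hv : (⨅ x : X, f x + g x) = (v : EReal)) :
    ∃ (ystar : X →L[ℝ] ℝ) (w : ℝ),
      (∀ x : X, (((-ystar) x : ℝ) : EReal) - f x ≤ ((-w : ℝ) : EReal)) ∧
      (∀ x : X, ((ystar x : ℝ) : EReal) - g x ≤ ((w - v : ℝ) : EReal)) := by
  have hvle : ∀ x : X, (v : EReal) ≤ f x + g x := fun x => hv ▸ iInf_le _ x
  set gx' : ℝ := (g x').toReal with hgx'def
  have hgx' : g x' = (gx' : EReal) := (EReal.coe_toReal hx'g (hgbot x')).symm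
  set fx' : ℝ := (f x').toReal with hfx'def
  have hfx' : f x' = (fx' : EReal) := (EReal.coe_toReal hx'f (hfbot x')).symm
  set B : Set (X × ℝ) := {p | g p.1 ≤ ((v - p.2 : ℝ) : EReal)} with hBdef
  -- B is convex
  have hBconv : Convex ℝ B := by
    intro p hp q hq a b ha hb hab
    have hp' : ((p.1, v - p.2) : X × ℝ) ∈ {p : X × ℝ | g p.1 ≤ (p.2 : EReal)} := hp
    have hq' : ((q.1, v - q.2) : X × ℝ) ∈ {p : X × ℝ | g p.1 ≤ (p.2 : EReal)} := hq
    have h := hgconv hp' hq' ha hb hab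
    simp only [mem_setOf_eq, Prod.smul_mk, Prod.mk_add_mk, smul_eq_mul] at h
    show g ((a • p + b • q).1) ≤ ((v - (a • p + b • q).2 : ℝ) : EReal)
    have e1 : (a • p + b • q).1 = a • p.1 + b • q.1 := rfl
    have e2 : (a • p + b • q).2 = a * p.2 + b * q.2 := rfl
    rw [e1, e2]
    have e3 : v - (a * p.2 + b * q.2) = a * (v - p.2) + b * (v - q.2) := by
      have hb' : b = 1 - a := by linarith
      subst hb'; ring
    rw [e3]
    exact h
  -- open subset of B
  obtain ⟨V, hVsub, hVopen, hVx'⟩ :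
      ∃ V : Set X, V ⊆ {x | g x < ((gx' + 1 : ℝ) : EReal)} ∧ IsOpen V ∧ x' ∈ V := by
    have hmem : {x | g x < ((gx' + 1 : ℝ) : EReal)} ∈ nhds x' := by
      have : g x' ∈ Iio ((gx' + 1 : ℝ) : EReal) := by
        rw [hgx', mem_Iio]; exact_mod_cast lt_add_one gx'
      exact hcont.preimage_mem_nhds (isOpen_Iio.mem_nhds this)
    rcases mem_nhds_iff.1 hmem with ⟨V, hVs, hVo, hVx⟩
    exact ⟨V, hVs, hVo, hVx⟩
  set W : Set (X × ℝ) := V ×ˢ Iio (v - gx' - 1) with hWdef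
  have hWB : W ⊆ B := by
    rintro ⟨x, r⟩ ⟨hxV, hr⟩
    have h1 : g x < ((gx' + 1 : ℝ) : EReal) := hVsub hxV
    have h2 : ((gx' + 1 : ℝ) : EReal) ≤ ((v - r : ℝ) : EReal) := by
      exact_mod_cast (by simp only [mem_Iio] at hr; linarith : gx' + 1 ≤ v - r)
    exact le_trans h1.le h2
  have hWint : W ⊆ interior B :=
    interior_maximal hWB ((hVopen.prod isOpen_Iio))
  have hy₀ : ((x', v - gx' - 2) : X × ℝ) ∈ interior B :=
    hWint ⟨hVx', by simp only [mem_Iio]; linarith⟩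
  have hxt : ∀ t : ℝ, t < v - gx' - 1 → ((x', t) : X × ℝ) ∈ interior B :=
    fun t ht => hWint ⟨hVx', by simpa using ht⟩
  -- disjointness
  have hdisj : Disjoint (interior B) {p : X × ℝ | f p.1 ≤ (p.2 : EReal)} := by
    rw [Set.disjoint_left]
    rintro ⟨x, r⟩ hpB hpA
    -- find δ > 0 with (x, r + δ) ∈ B
    have hcont2 : Continuous (fun t : ℝ => ((x, r + t) : X × ℝ)) :=
      Continuous.prodMk continuous_const (continuous_const.add continuous_id)
    have hnb : (fun t : ℝ => ((x, r + t) : X × ℝ)) ⁻¹' interior B ∈ nhds (0 : ℝ) := by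
      apply hcont2.continuousAt.preimage_mem_nhds
      apply isOpen_interior.mem_nhds
      simpa using hpB
    rcases Metric.mem_nhds_iff.1 hnb with ⟨ε, hε, hball⟩
    have hδ : ((x, r + ε / 2) : X × ℝ) ∈ B := by
      apply interior_subset
      apply hball
      show dist (ε / 2) (0 : ℝ) < ε
      rw [Real.dist_eq, sub_zero, abs_of_pos (half_pos hε)]
      linarith
    have hgB : g x ≤ ((v - (r + ε / 2) : ℝ) : EReal) := hδ
    have hfA : f x ≤ ((r : ℝ) : EReal) := hpA
    have : (v : EReal) ≤ ((r + (v - (r + ε / 2)) : ℝ) : EReal) := by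
      calc (v : EReal) ≤ f x + g x := hvle x
        _ ≤ ((r : ℝ) : EReal) + ((v - (r + ε / 2) : ℝ) : EReal) := add_le_add hfA hgB
        _ = ((r + (v - (r + ε / 2)) : ℝ) : EReal) := (EReal.coe_add _ _).symm
    have : v ≤ r + (v - (r + ε / 2)) := EReal.coe_le_coe_iff.1 this
    linarith
  -- separation
  obtain ⟨φ, u, hφB, hφA⟩ :=
    geometric_hahn_banach_open hBconv.interior isOpen_interior hfconv hdisj
  set ψ : X →L[ℝ] ℝ := φ.comp (ContinuousLinearMap.inl ℝ X ℝ) with hψdef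
  set c : ℝ := φ (0, 1) with hcdef
  have hφeq : ∀ p : X × ℝ, φ p = ψ p.1 + p.2 * c := by
    rintro ⟨x, r⟩
    have e0 : ((x, r) : X × ℝ) = ((x, 0) : X × ℝ) + ((0 : X), r) := by
      simp [Prod.ext_iff]
    have e1 : φ ((0 : X), r) = r * c := by
      rw [show (((0 : X), r) : X × ℝ) = r • (((0 : X), (1 : ℝ)) : X × ℝ) by simp [Prod.ext_iff],
        map_smul, smul_eq_mul]
    have e2 : ψ x = φ (x, 0) := by
      simp [hψdef]
    show φ (x, r) = ψ x + r * c
    rw [e0, map_add, e1, e2]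
  -- c ≥ 0
  have hc0 : 0 ≤ c := by
    by_contra hneg
    push_neg at hneg
    set t : ℝ := min ((u - ψ x') / c - 1) (v - gx' - 2) with htdef
    have ht1 : t < v - gx' - 1 := lt_of_le_of_lt (min_le_right _ _) (by linarith)
    have h := hφB _ (hxt t ht1)
    rw [hφeq] at h
    simp only at h
    -- h : ψ x' + t * c < u
    have ht2 : t ≤ (u - ψ x') / c - 1 := min_le_left _ _
    have ht3 : t < (u - ψ x') / c := by linarith
    have : t * c > ((u - ψ x') / c) * c := by
      exact mul_lt_mul_of_neg_right ht3 hneg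
    rw [div_mul_cancel₀ _ (ne_of_lt hneg)] at this
    linarith
  -- bound on A side
  have hfineq : ∀ (x : X) (r : ℝ), f x ≤ (r : EReal) → u ≤ ψ x + r * c := by
    intro x r h
    have := hφA (x, r) h
    rwa [hφeq] at this
  -- c ≠ 0
  have hcpos : 0 < c := by
    rcases lt_or_eq_of_le hc0 with h | h
    · exact h
    · exfalso
      have h1 := hφB _ (hxt (v - gx' - 2) (by linarith))
      rw [hφeq] at h1
      simp only [← h] at h1
      have h2 := hfineq x' fx' (le_of_eq hfx')
      rw [← h] at h2
      simp at h1 h2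
      linarith
  -- bound on all of B
  have hφBle : ∀ p ∈ B, φ p ≤ u := by
    intro p hp
    by_contra hlt
    push_neg at hlt
    set y₀ : X × ℝ := (x', v - gx' - 2) with hy₀def
    have hy₀lt : φ y₀ < u := hφB _ hy₀
    have hdpos : 0 < φ p - φ y₀ := by linarith
    set t : ℝ := (φ p - u) / (2 * (φ p - φ y₀)) with htdef
    have ht0 : 0 < t := div_pos (by linarith) (by linarith)
    have ht1 : t ≤ 1 := by
      rw [htdef, div_le_one (by linarith)]
      linarith
    have hq := hBconv.add_smul_sub_mem_interior hp hy₀ ⟨ht0, ht1⟩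
    have hqlt := hφB _ hq
    rw [map_add, map_smul, map_sub, smul_eq_mul] at hqlt
    have he : t * (φ y₀ - φ p) = -((φ p - u) / 2) := by
      rw [htdef]
      field_simp
      ring
    rw [he] at hqlt
    linarith
  have hgineq : ∀ (x : X) (s : ℝ), g x ≤ (s : EReal) → ψ x + (v - s) * c ≤ u := by
    intro x s h
    have hmem : ((x, v - s) : X × ℝ) ∈ B := by
      show g x ≤ ((v - (v - s) : ℝ) : EReal)
      simpa using h
    have := hφBle _ hmem
    rwa [hφeq] at this
  -- conclusion
  refine ⟨c⁻¹ • ψ, u / c, ?_, ?_⟩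
  · intro x
    by_cases hft : f x = ⊤
    · rw [hft, EReal.sub_top]; exact bot_le
    · have ha : f x = ((f x).toReal : EReal) := (EReal.coe_toReal hft (hfbot x)).symm
      set a := (f x).toReal
      have h := hfineq x a (le_of_eq ha)
      rw [ha, ← EReal.coe_sub]
      apply EReal.coe_le_coe_iff.2
      have e1 : (-(c⁻¹ • ψ)) x = -(c⁻¹ * ψ x) := by
        simp [ContinuousLinearMap.neg_apply, ContinuousLinearMap.smul_apply, smul_eq_mul]
      rw [e1]
      have h2 : u / c ≤ (ψ x + a * c) / c := by
        rw [div_le_div_iff_of_pos_right hcpos]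
        exact h
      have h3 : (ψ x + a * c) / c = ψ x / c + a := by
        field_simp
      have h4 : c⁻¹ * ψ x = ψ x / c := by
        rw [inv_mul_eq_div]
      linarith
  · intro x
    by_cases hgt : g x = ⊤
    · rw [hgt, EReal.sub_top]; exact bot_le
    · have hb : g x = ((g x).toReal : EReal) := (EReal.coe_toReal hgt (hgbot x)).symm
      set b := (g x).toReal
      have h := hgineq x b (le_of_eq hb)
      rw [hb, ← EReal.coe_sub]
      apply EReal.coe_le_coe_iff.2
      have e1 : (c⁻¹ • ψ) x = c⁻¹ * ψ x := by
        simp [ContinuousLinearMap.smul_apply, smul_eq_mul]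
      rw [e1]
      have h4 : c⁻¹ * ψ x = ψ x / c := by rw [inv_mul_eq_div]
      -- from h : ψ x + (v - b) * c ≤ u
      have h2 : (ψ x + (v - b) * c) / c ≤ u / c := by
        rw [div_le_div_iff_of_pos_right hcpos]
        exact h
      have h3 : (ψ x + (v - b) * c) / c = ψ x / c + (v - b) := by
        field_simp
      linarith

theorem fenchel_duality_of_continuity
    {X : Type*} [AddCommGroup X] [Module ℝ X] [TopologicalSpace X]
    [IsTopologicalAddGroup X] [ContinuousSMul ℝ X] [LocallyConvexSpace ℝ X] [T2Space X]
    (f g : X → EReal)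
    (hfbot : ∀ x, f x ≠ ⊥) (hgbot : ∀ x, g x ≠ ⊥)
    (hfconv : Convex ℝ {p : X × ℝ | f p.1 ≤ (p.2 : EReal)})
    (hgconv : Convex ℝ {p : X × ℝ | g p.1 ≤ (p.2 : EReal)})
    (x' : X) (hx'f : f x' ≠ ⊤) (hx'g : g x' ≠ ⊤) (hcont : ContinuousAt g x')
    (v : ℝ) (hv : (⨅ x : X, f x + g x) = (v : EReal)) :
    ∃ ystar : X →L[ℝ] ℝ,
      (-(⨆ x : X, (((-ystar) x : ℝ) : EReal) - f x)
        - (⨆ x : X, ((ystar x : ℝ) : EReal) - g x) = (v : EReal)) ∧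
      ∀ zstar : X →L[ℝ] ℝ,
        -(⨆ x : X, (((-zstar) x : ℝ) : EReal) - f x)
          - (⨆ x : X, ((zstar x : ℝ) : EReal) - g x) ≤ (v : EReal) := by
  obtain ⟨ystar, w, h1, h2⟩ :=
    fenchel_main_aux f g hfbot hgbot hfconv hgconv x' hx'f hx'g hcont v hv
  have hweak := fenchel_weak_dual f g hfbot hgbot v hv
  refine ⟨ystar, ?_, hweak⟩
  set F := ⨆ x : X, (((-ystar) x : ℝ) : EReal) - f x with hF
  set G := ⨆ x : X, ((ystar x : ℝ) : EReal) - g x with hG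
  have hfx' : f x' = (((f x').toReal : ℝ) : EReal) := (EReal.coe_toReal hx'f (hfbot x')).symm
  have hgx' : g x' = (((g x').toReal : ℝ) : EReal) := (EReal.coe_toReal hx'g (hgbot x')).symm
  have hFub : F ≤ ((-w : ℝ) : EReal) := iSup_le h1
  have hGub : G ≤ ((w - v : ℝ) : EReal) := iSup_le h2
  have hFlb : ((((-ystar) x' - (f x').toReal : ℝ)) : EReal) ≤ F := by
    have := le_iSup (fun x => (((-ystar) x : ℝ) : EReal) - f x) x'
    rw [hfx'] at this
    rw [EReal.coe_sub]
    exact this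
  have hGlb : ((((ystar) x' - (g x').toReal : ℝ)) : EReal) ≤ G := by
    have := le_iSup (fun x => (((ystar) x : ℝ) : EReal) - g x) x'
    rw [hgx'] at this
    rw [EReal.coe_sub]
    exact this
  have hFt : F ≠ ⊤ := ne_top_of_le_ne_top (EReal.coe_ne_top _) hFub
  have hGt : G ≠ ⊤ := ne_top_of_le_ne_top (EReal.coe_ne_top _) hGub
  have hFb : F ≠ ⊥ := ((EReal.bot_lt_coe _).trans_le hFlb).ne'
  have hGb : G ≠ ⊥ := ((EReal.bot_lt_coe _).trans_le hGlb).ne'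
  set a := F.toReal with hadef
  set b := G.toReal with hbdef
  have haF : F = (a : EReal) := (EReal.coe_toReal hFt hFb).symm
  have hbG : G = (b : EReal) := (EReal.coe_toReal hGt hGb).symm
  have ha : a ≤ -w := EReal.coe_le_coe_iff.1 (haF ▸ hFub)
  have hb : b ≤ w - v := EReal.coe_le_coe_iff.1 (hbG ▸ hGub)
  have hcoe : -F - G = ((-a - b : ℝ) : EReal) := by
    rw [haF, hbG, ← EReal.coe_neg, ← EReal.coe_sub]
  have hle : -a - b ≤ v := by
    have := hweak ystar
    rw [← hF, ← hG, hcoe] at this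
    exact EReal.coe_le_coe_iff.1 this
  have hge : v ≤ -a - b := by linarith
  rw [hcoe]
  exact EReal.coe_eq_coe_iff.2 (by linarith)
end
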